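/- Let X be a bifurcating Markov chain with kernel 𝒫 and initial distribution ν satisfying the uniform geometric ergodicity assumption with 2α² < 1, and let f be a bounded measurable real function on S. Then for all integers n ≥ p ≥ 0 and all δ > 0, with a_α = Σ_{m≥0}(2α²)^m: P( | |𝔾_{n−p}|^{-1} M_{𝔾_{n−p}}(f̃) | > δ ) ≤ 2 exp( − (δ² |𝔾_{n−p}|)/(4 ‖f‖²_∞ M² (1+α)² a_α) · (1 − 2‖f‖_∞ M α^{n−p}/δ) ). -/

import Mathlib

open MeasureTheory Filter ENNReal ProbabilityTheory

namespace BMCMDP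

variable {S : Type*} [MeasurableSpace S] {Ω : Type*} [MeasurableSpace Ω]

/-- The `k`-th generation `𝔾_k` of the regular binary tree, as a finset of words on `{0,1}`. -/
def Gen (k : ℕ) : Finset (List Bool) :=
  Finset.image (fun g : Fin k → Bool => List.ofFn g) Finset.univ

/-- The tree `𝕋_k` up to generation `k`. -/
def TreeUpTo (k : ℕ) : Finset (List Bool) :=
  (Finset.range (k + 1)).biUnion Gen

/-- `i𝔾_r = {ij : j ∈ 𝔾_r}`. -/
def subGen (i : List Bool) (r : ℕ) : Finset (List Bool) :=
  (Gen r).image (fun j => i ++ j)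

/-- `M_A(f) = ∑_{u ∈ A} f(X_u)`. -/
def Mfun (X : List Bool → Ω → S) (A : Finset (List Bool)) (f : S → ℝ) (ω : Ω) : ℝ :=
  ∑ u ∈ A, f (X u ω)

/-- The kernel `Pk` applied to a function on `S³`: `(Pkg)(x) = ∫ g(x,y,z) Pk(x,dy,dz)`. -/
noncomputable def P3 (Pk : Kernel S (S × S)) (g : S × S × S → ℝ) (x : S) : ℝ :=
  ∫ yz, g (x, yz.1, yz.2) ∂(Pk x)

/-- The kernel `Pk` applied to a function on `S²`: `(Pkg)(x) = ∫ g(y,z) Pk(x,dy,dz)`. -/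
noncomputable def P2 (Pk : Kernel S (S × S)) (g : S × S → ℝ) (x : S) : ℝ :=
  ∫ yz, g yz ∂(Pk x)

/-- The kernel `Pk` applied to a complex-valued function on `S²`. -/
noncomputable def P2C (Pk : Kernel S (S × S)) (g : S × S → ℂ) (x : S) : ℂ :=
  ∫ yz, g yz ∂(Pk x)

/-- The operator `𝒬 = (Pk₀ + Pk₁)/2` acting on functions. -/
noncomputable def Qop (Pk : Kernel S (S × S)) (f : S → ℝ) : S → ℝ :=
  fun x => ((∫ yz, f yz.1 ∂(Pk x)) + (∫ yz, f yz.2 ∂(Pk x))) / 2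

/-- The iterate `𝒬ⁿ`. -/
noncomputable def Qiter (Pk : Kernel S (S × S)) (n : ℕ) (f : S → ℝ) : S → ℝ :=
  (Qop Pk)^[n] f

/-- `f̃ = f - ⟨μ, f⟩`. -/
noncomputable def tildeF (μ : Measure S) (f : S → ℝ) : S → ℝ :=
  fun x => f x - ∫ y, f y ∂μ

/-- Uniform geometric ergodicity: `|𝒬ⁿf(x) - ⟨μ,f⟩| ≤ M αⁿ ‖f‖_∞` for every bounded
measurable `f` (quantified through any uniform bound `C` of `f`). -/
def UnifErg (Pk : Kernel S (S × S)) (μ : Measure S) (M α : ℝ) : Prop :=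
  ∀ f : S → ℝ, Measurable f → ∀ C : ℝ, (∀ x, |f x| ≤ C) →
    ∀ (n : ℕ) (x : S), |Qiter Pk n f x - ∫ y, f y ∂μ| ≤ M * α ^ n * C

/-- symmetrized tensor product `g ⊗_sym h`. -/
noncomputable def symTens (g h : S → ℝ) : S × S → ℝ :=
  fun yz => (g yz.1 * h yz.2 + h yz.1 * g yz.2) / 2

/-- symmetrized tensor product of complex-valued functions. -/
noncomputable def symTensC (g h : S → ℂ) : S × S → ℂ :=
  fun yz => (g yz.1 * h yz.2 + h yz.1 * g yz.2) / 2

/-- the σ-field `σ(X_j ; j ∈ A)`. -/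
def treeSigma (X : List Bool → Ω → S) (A : Finset (List Bool)) : MeasurableSpace Ω :=
  ⨆ j ∈ A, MeasurableSpace.comap (X j) inferInstance

/-- `X = (X_i, i ∈ 𝕋)` is a bifurcating Markov chain with kernel `Pk` and initial
distribution `ν`. -/
structure IsBMC (P : Measure Ω) (Pk : Kernel S (S × S)) (ν : Measure S)
    (X : List Bool → Ω → S) : Prop where
  meas : ∀ i, Measurable (X i)
  init : P.map (X []) = ν
  branching : ∀ (k : ℕ) (g : List Bool → S × S × S → ℝ),
    (∀ i, Measurable (g i)) → (∀ i, ∃ C, ∀ y, |g i y| ≤ C) →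
    condExp (treeSigma X (TreeUpTo k)) P
        (fun ω => ∏ i ∈ Gen k, g i (X i ω, X (i ++ [false]) ω, X (i ++ [true]) ω))
      =ᵐ[P] fun ω => ∏ i ∈ Gen k, P3 Pk (g i) (X i ω)

/-- The lexicographic-type order on the tree: `u ≤ i` iff `u` is an ancestor of `i`, or
`v0` is an ancestor of `u` and `v1` an ancestor of `i` where `v` is the most recent
common ancestor. -/
def treeLE (u i : List Bool) : Prop :=
  u <+: i ∨ ∃ v : List Bool, (v ++ [false]) <+: u ∧ (v ++ [true]) <+: i

/-- The σ-field `ℱ_i = σ(X_u ; u ≤ i)`. -/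
def sigmaLE (X : List Bool → Ω → S) (i : List Bool) : MeasurableSpace Ω :=
  ⨆ u ∈ {u : List Bool | treeLE u i}, MeasurableSpace.comap (X u) inferInstance

/-- `N_{n,i}(𝔣) = |𝔾_n|^{-1/2} ∑_{ℓ=0}^{n-|i|} M_{i𝔾_{n-|i|-ℓ}}(f̃_ℓ)`. -/
noncomputable def Nfun (X : List Bool → Ω → S) (μ : Measure S) (f : ℕ → S → ℝ)
    (n : ℕ) (i : List Bool) (ω : Ω) : ℝ :=
  (Real.sqrt (2 ^ n))⁻¹ *
    ∑ ℓ ∈ Finset.range (n - i.length + 1),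
      Mfun X (subGen i (n - i.length - ℓ)) (tildeF μ (f ℓ)) ω

/-- `Δ_{n,i}(𝔣) = N_{n,i}(𝔣) - E[N_{n,i}(𝔣) | ℱ_i]`. -/
noncomputable def Delta (P : Measure Ω) (X : List Bool → Ω → S) (μ : Measure S)
    (f : ℕ → S → ℝ) (n : ℕ) (i : List Bool) : Ω → ℝ :=
  fun ω => Nfun X μ f n i ω - condExp (sigmaLE X i) P (Nfun X μ f n i) ω

/-- The rate function `I(x) = x²/(2σ)` if `σ ≠ 0`, `I ≡ +∞` if `σ = 0`. -/
noncomputable def mdpRate (sig : ℝ) : ℝ → ℝ≥0∞ := fun x =>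
  if sig = 0 then ⊤ else ENNReal.ofReal (x ^ 2 / (2 * sig))

/-- `(Z_n)` satisfies a moderate deviation principle with speed `b_n²` and rate
function `I` (with the convention `log 0 = -∞`, via `ENNReal.log`). -/
def SatisfiesMDP (P : Measure Ω) (Z : ℕ → Ω → ℝ) (b : ℕ → ℝ) (I : ℝ → ℝ≥0∞) : Prop :=
  ∀ A : Set ℝ, MeasurableSet A →
    (-(⨅ x ∈ interior A, (I x : EReal)) ≤
        Filter.liminf
          (fun n => ((((b n) ^ 2)⁻¹ : ℝ) : EReal) * ENNReal.log (P {ω | Z n ω ∈ A}))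
          Filter.atTop) ∧
      Filter.limsup
          (fun n => ((((b n) ^ 2)⁻¹ : ℝ) : EReal) * ENNReal.log (P {ω | Z n ω ∈ A}))
          Filter.atTop ≤ -(⨅ x ∈ closure A, (I x : EReal))

/-- `Σ₁^sub(𝔣)`. -/
noncomputable def Sigma1Sub (Pk : Kernel S (S × S)) (μ : Measure S) (f : ℕ → S → ℝ) : ℝ :=
  (∑' ℓ : ℕ, (2 : ℝ) ^ (-(ℓ : ℤ)) * ∫ x, (tildeF μ (f ℓ) x) ^ 2 ∂μ) +
    ∑' q : ℕ × ℕ, (2 : ℝ) ^ ((q.2 : ℤ) - (q.1 : ℤ)) *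
      ∫ x, P2 Pk (fun yz =>
        Qiter Pk q.2 (tildeF μ (f q.1)) yz.1 * Qiter Pk q.2 (tildeF μ (f q.1)) yz.2) x ∂μ

/-- `Σ₂^sub(𝔣)` (indices: `q.1 = ℓ`, `q.2.1 = k`, `q.2.2 = r`). -/
noncomputable def Sigma2Sub (Pk : Kernel S (S × S)) (μ : Measure S) (f : ℕ → S → ℝ) : ℝ :=
  (∑' q : ℕ × ℕ, if q.1 < q.2 then
      (2 : ℝ) ^ (-(q.1 : ℤ)) *
        ∫ x, tildeF μ (f q.2) x * Qiter Pk (q.2 - q.1) (tildeF μ (f q.1)) x ∂μ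
    else 0) +
    ∑' q : ℕ × ℕ × ℕ, if q.1 < q.2.1 then
      (2 : ℝ) ^ ((q.2.2 : ℤ) - (q.1 : ℤ)) *
        ∫ x, P2 Pk (symTens (Qiter Pk q.2.2 (tildeF μ (f q.2.1)))
          (Qiter Pk (q.2.1 - q.1 + q.2.2) (tildeF μ (f q.1)))) x ∂μ
    else 0

/-- `Σ^sub(𝔣) = Σ₁^sub(𝔣) + 2Σ₂^sub(𝔣)`. -/
noncomputable def SigmaSub (Pk : Kernel S (S × S)) (μ : Measure S) (f : ℕ → S → ℝ) : ℝ :=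
  Sigma1Sub Pk μ f + 2 * Sigma2Sub Pk μ f

/-- `Σ_𝔾(f)` (sub-critical, single function). -/
noncomputable def SigmaG (Pk : Kernel S (S × S)) (μ : Measure S) (f : S → ℝ) : ℝ :=
  (∫ x, (tildeF μ f x) ^ 2 ∂μ) +
    ∑' k : ℕ, (2 : ℝ) ^ k *
      ∫ x, P2 Pk (fun yz => Qiter Pk k (tildeF μ f) yz.1 * Qiter Pk k (tildeF μ f) yz.2) x ∂μ

/-- `Σ_{𝕋,2}(f)` (sub-critical, single function). -/
noncomputable def SigmaT2 (Pk : Kernel S (S × S)) (μ : Measure S) (f : S → ℝ) : ℝ :=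
  (∑' k : ℕ, if 1 ≤ k then ∫ x, tildeF μ f x * Qiter Pk k (tildeF μ f) x ∂μ else 0) +
    ∑' q : ℕ × ℕ, if 1 ≤ q.1 then
      (2 : ℝ) ^ q.2 *
        ∫ x, P2 Pk (symTens (Qiter Pk q.2 (tildeF μ f))
          (Qiter Pk (q.2 + q.1) (tildeF μ f))) x ∂μ
    else 0

/-- `Σ_𝕋(f) = Σ_𝔾(f) + 2Σ_{𝕋,2}(f)`. -/
noncomputable def SigmaT (Pk : Kernel S (S × S)) (μ : Measure S) (f : S → ℝ) : ℝ :=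
  SigmaG Pk μ f + 2 * SigmaT2 Pk μ f

/-- complexification of a real function. -/
noncomputable def cplx (f : S → ℝ) : S → ℂ := fun x => (f x : ℂ)

/-- `conj(ℛ_j)(f)` for a real function `f`: the complex conjugate of `ℛ_j(f)`. -/
noncomputable def RconjApp {J : Type*} (R : J → (S → ℂ) → S → ℂ) (j : J) (f : S → ℝ) :
    S → ℂ :=
  fun x => (starRingEnd ℂ) (R j (cplx f) x)

/-- The second spectral gap (uniform ergodicity with second spectral gap) assumption. -/
structure SpectralGap (Pk : Kernel S (S × S)) (μ : Measure S) (M α : ℝ)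
    {J : Type*} [Fintype J] (αj : J → ℂ) (R : J → (S → ℂ) → S → ℂ) (β : ℕ → ℝ) :
    Prop where
  J_nonempty : Nonempty J
  distinct : Function.Injective αj
  mod : ∀ j, ‖αj j‖ = α
  lin : ∀ j (a : ℂ) (g h : S → ℂ), R j (a • g + h) = a • R j g + R j h
  nonzero : ∀ j, R j ≠ 0
  idem : ∀ j, R j ∘ R j = R j
  orth : ∀ j j', j ≠ j' → R j ∘ R j' = 0
  beta_nonneg : ∀ n, 0 ≤ β n
  beta_le_one : ∀ n, β n ≤ 1
  beta_anti : Antitone β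
  beta_lim : Tendsto β atTop (nhds 0)
  estimate : ∀ f : S → ℝ, Measurable f → ∀ C : ℝ, (∀ x, |f x| ≤ C) →
    ∀ (n : ℕ) (x : S),
      ‖(Qiter Pk n f x : ℂ) - ((∫ y, f y ∂μ : ℝ) : ℂ) -
          (α : ℂ) ^ n * ∑ j, (αj j / (α : ℂ)) ^ n * R j (cplx f) x‖
        ≤ M * β n * α ^ n * C

/-- `Σ₁^crit(𝔣)` (complex-valued expression). -/
noncomputable def Sigma1CritC (Pk : Kernel S (S × S)) (μ : Measure S) {J : Type*}
    [Fintype J] (R : J → (S → ℂ) → S → ℂ) (f : ℕ → S → ℝ) : ℂ :=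
  ∑' k : ℕ, ((2 : ℂ) ^ k)⁻¹ *
    ∑ j, ∫ x, P2C Pk (symTensC (R j (cplx (f k))) (RconjApp R j (f k))) x ∂μ

/-- `f*_{k,ℓ} = ∑_j θ_j^{ℓ-k} ℛ_j(f_k) ⊗_sym conj(ℛ_j)(f_ℓ)`. -/
noncomputable def fstar (α : ℝ) {J : Type*} [Fintype J] (αj : J → ℂ)
    (R : J → (S → ℂ) → S → ℂ) (f : ℕ → S → ℝ) (k ℓ : ℕ) : S × S → ℂ :=
  fun yz => ∑ j, (αj j / (α : ℂ)) ^ ((ℓ : ℤ) - (k : ℤ)) *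
    symTensC (R j (cplx (f k))) (RconjApp R j (f ℓ)) yz

/-- `Σ₂^crit(𝔣)` (complex-valued expression); `q.1 = ℓ`, `q.2 = k`. -/
noncomputable def Sigma2CritC (Pk : Kernel S (S × S)) (μ : Measure S) (α : ℝ)
    {J : Type*} [Fintype J] (αj : J → ℂ) (R : J → (S → ℂ) → S → ℂ)
    (f : ℕ → S → ℝ) : ℂ :=
  ∑' q : ℕ × ℕ, if q.1 < q.2 then
    (((2 : ℝ) ^ (-(((q.2 : ℝ) + (q.1 : ℝ)) / 2)) : ℝ) : ℂ) *
      ∫ x, P2C Pk (fstar α αj R f q.2 q.1) x ∂μ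
  else 0

/-- `Σ^crit(𝔣) = Σ₁^crit(𝔣) + 2Σ₂^crit(𝔣)` (its real value). -/
noncomputable def SigmaCrit (Pk : Kernel S (S × S)) (μ : Measure S) (α : ℝ)
    {J : Type*} [Fintype J] (αj : J → ℂ) (R : J → (S → ℂ) → S → ℂ)
    (f : ℕ → S → ℝ) : ℝ :=
  (Sigma1CritC Pk μ R f + 2 * Sigma2CritC Pk μ α αj R f).re

/-- `Σ_𝔾^crit(f)` (critical, single function; its real value). -/
noncomputable def SigmaGcrit (Pk : Kernel S (S × S)) (μ : Measure S) {J : Type*}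
    [Fintype J] (R : J → (S → ℂ) → S → ℂ) (f : S → ℝ) : ℝ :=
  (∑ j, ∫ x, P2C Pk (symTensC (R j (cplx f)) (RconjApp R j f)) x ∂μ).re

/-- `Σ_𝕋^crit(f) = Σ_𝔾^crit(f) + 2Σ_{𝕋,2}^crit(f)` (critical, single function). -/
noncomputable def SigmaTcrit (Pk : Kernel S (S × S)) (μ : Measure S) (α : ℝ)
    {J : Type*} [Fintype J] (αj : J → ℂ) (R : J → (S → ℂ) → S → ℂ) (f : S → ℝ) : ℝ :=
  ((∑ j, ∫ x, P2C Pk (symTensC (R j (cplx f)) (RconjApp R j f)) x ∂μ) +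
      2 * ∑ j, ((Real.sqrt 2 : ℂ) * (αj j / (α : ℂ)) - 1)⁻¹ *
        ∫ x, P2C Pk (symTensC (R j (cplx f)) (RconjApp R j f)) x ∂μ).re


/-! ### Auxiliary lemmas for the proof of `statement_6` -/

section AuxGen

lemma mem_Gen {k : ℕ} {u : List Bool} : u ∈ Gen k ↔ u.length = k := by
  constructor
  · intro hu
    obtain ⟨g, -, rfl⟩ := Finset.mem_image.mp hu
    simp
  · intro h
    subst h
    exact Finset.mem_image.mpr ⟨u.get, Finset.mem_univ _, List.ofFn_get u⟩

lemma Gen_zero : Gen 0 = {[]} := by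
  ext u; simp [mem_Gen, List.length_eq_zero_iff]

lemma Gen_succ (k : ℕ) :
    Gen (k + 1) = (Gen k).biUnion (fun i => {i ++ [false], i ++ [true]}) := by
  ext u
  simp only [mem_Gen, Finset.mem_biUnion, Finset.mem_insert, Finset.mem_singleton]
  constructor
  · intro h
    have hne : u ≠ [] := by intro h'; subst h'; simp at h
    refine ⟨u.dropLast, by simp [h], ?_⟩
    rcases (u.getLast hne).eq_false_or_eq_true with hb | hb
    · right; rw [← hb]; exact (List.dropLast_append_getLast hne).symm
    · left; rw [← hb]; exact (List.dropLast_append_getLast hne).symm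
  · rintro ⟨i, hi, rfl | rfl⟩ <;> simp [hi]

lemma Gen_pairwiseDisjoint (k : ℕ) :
    (↑(Gen k) : Set (List Bool)).PairwiseDisjoint
      (fun i => ({i ++ [false], i ++ [true]} : Finset (List Bool))) := by
  intro i hi i' hi' hne
  simp only [Finset.mem_coe, mem_Gen] at hi hi'
  refine Finset.disjoint_left.mpr ?_
  intro u hu hu'
  simp only [Finset.mem_insert, Finset.mem_singleton] at hu hu'
  have : i = i' := by
    rcases hu with rfl | rfl <;> rcases hu' with h | h <;>
      exact (List.append_inj_left h (by rw [hi, hi'])).symm ▸ rfl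
  exact hne this

lemma Gen_succ_sum {β : Type*} [AddCommMonoid β] (k : ℕ) (F : List Bool → β) :
    ∑ u ∈ Gen (k + 1), F u = ∑ i ∈ Gen k, (F (i ++ [false]) + F (i ++ [true])) := by
  rw [Gen_succ, Finset.sum_biUnion (Gen_pairwiseDisjoint k)]
  refine Finset.sum_congr rfl fun i _ => ?_
  rw [Finset.sum_pair (by simp)]

lemma Gen_card (k : ℕ) : (Gen k).card = 2 ^ k := by
  induction k with
  | zero => simp [Gen_zero]
  | succ k ih =>
    rw [Gen_succ, Finset.card_biUnion]
    · rw [Finset.sum_congr rfl (fun i _ => by rw [Finset.card_pair (by simp)]),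
        Finset.sum_const, ih]
      ring
    · intro i hi i' hi' hne
      exact Gen_pairwiseDisjoint k (by exact_mod_cast hi) (by exact_mod_cast hi') hne

end AuxGen

section AuxQ

lemma integrable_of_bdd {T : Type*} [MeasurableSpace T] {ρ : Measure T} [IsFiniteMeasure ρ]
    {h : T → ℝ} (hm : Measurable h) {c : ℝ} (hb : ∀ x, |h x| ≤ c) : Integrable h ρ :=
  (integrable_const c).mono' hm.aestronglyMeasurable (ae_of_all _ hb)

lemma abs_integral_le {T : Type*} [MeasurableSpace T] {ρ : Measure T} [IsProbabilityMeasure ρ]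
    {h : T → ℝ} {c : ℝ} (hb : ∀ x, |h x| ≤ c) : |∫ x, h x ∂ρ| ≤ c := by
  have := norm_integral_le_of_norm_le_const (μ := ρ) (f := h) (C := c) (ae_of_all _ hb)
  simpa using this

lemma Qop_meas (Pk : Kernel S (S × S)) [IsMarkovKernel Pk] {φ : S → ℝ} (hφ : Measurable φ) :
    Measurable (Qop Pk φ) := by
  have h1 : Measurable fun x => ∫ yz, φ yz.1 ∂(Pk x) := by
    have h : StronglyMeasurable (fun p : S × (S × S) => φ p.2.1) :=
      (hφ.comp (measurable_snd.fst)).stronglyMeasurable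
    exact (h.integral_kernel_prod_right' (κ := Pk)).measurable
  have h2 : Measurable fun x => ∫ yz, φ yz.2 ∂(Pk x) := by
    have h : StronglyMeasurable (fun p : S × (S × S) => φ p.2.2) :=
      (hφ.comp (measurable_snd.snd)).stronglyMeasurable
    exact (h.integral_kernel_prod_right' (κ := Pk)).measurable
  exact (h1.add h2).div_const 2

lemma Qop_bound (Pk : Kernel S (S × S)) [IsMarkovKernel Pk] {φ : S → ℝ} {c : ℝ}
    (hb : ∀ x, |φ x| ≤ c) (x : S) : |Qop Pk φ x| ≤ c := by
  have h1 : |∫ yz, φ yz.1 ∂(Pk x)| ≤ c := abs_integral_le (fun yz => hb yz.1)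
  have h2 : |∫ yz, φ yz.2 ∂(Pk x)| ≤ c := abs_integral_le (fun yz => hb yz.2)
  rw [Qop, abs_div, abs_of_nonneg (by norm_num : (0:ℝ) ≤ 2)]
  have := abs_add_le (∫ yz, φ yz.1 ∂(Pk x)) (∫ yz, φ yz.2 ∂(Pk x))
  linarith

lemma Qiter_succ' (Pk : Kernel S (S × S)) (n : ℕ) (φ : S → ℝ) :
    Qiter Pk (n + 1) φ = Qop Pk (Qiter Pk n φ) := by
  simp [Qiter, Function.iterate_succ_apply']

lemma Qiter_meas (Pk : Kernel S (S × S)) [IsMarkovKernel Pk] {φ : S → ℝ}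
    (hφ : Measurable φ) (n : ℕ) : Measurable (Qiter Pk n φ) := by
  induction n with
  | zero => exact hφ
  | succ n ih => rw [Qiter_succ']; exact Qop_meas Pk ih

lemma Qiter_bound (Pk : Kernel S (S × S)) [IsMarkovKernel Pk] {φ : S → ℝ} {c : ℝ}
    (hb : ∀ x, |φ x| ≤ c) (n : ℕ) (x : S) : |Qiter Pk n φ x| ≤ c := by
  induction n generalizing x with
  | zero => exact hb x
  | succ n ih => rw [Qiter_succ']; exact Qop_bound Pk ih x

lemma Qop_sub_const (Pk : Kernel S (S × S)) [IsMarkovKernel Pk] {φ : S → ℝ}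
    (hm : Measurable φ) {c : ℝ} (hb : ∀ x, |φ x| ≤ c) (r : ℝ) :
    Qop Pk (fun x => φ x - r) = fun x => Qop Pk φ x - r := by
  funext x
  have hi1 : Integrable (fun yz : S × S => φ yz.1) (Pk x) :=
    integrable_of_bdd (hm.comp measurable_fst) (fun yz => hb yz.1)
  have hi2 : Integrable (fun yz : S × S => φ yz.2) (Pk x) :=
    integrable_of_bdd (hm.comp measurable_snd) (fun yz => hb yz.2)
  simp only [Qop]
  rw [integral_sub hi1 (integrable_const r), integral_sub hi2 (integrable_const r),
    integral_const]
  simp [measure_univ]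
  ring

lemma Qiter_tildeF (Pk : Kernel S (S × S)) [IsMarkovKernel Pk] (μ : Measure S)
    {f : S → ℝ} (hm : Measurable f) {c : ℝ} (hb : ∀ x, |f x| ≤ c) (n : ℕ) :
    Qiter Pk n (tildeF μ f) = fun x => Qiter Pk n f x - ∫ y, f y ∂μ := by
  induction n with
  | zero => rfl
  | succ n ih =>
    rw [Qiter_succ', ih, Qop_sub_const Pk (Qiter_meas Pk hm n) (Qiter_bound Pk hb n),
      ← Qiter_succ']

end AuxQ

section AuxHoeffding

lemma exp_le_cosh_add {b w : ℝ} (hb : 0 < b) (hw : |w| ≤ b) (t : ℝ) :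
    Real.exp (t * w) ≤ Real.cosh (t * b) + (w / b) * Real.sinh (t * b) := by
  have hwb := abs_le.mp hw
  set θ : ℝ := (b + w) / (2 * b) with hθ
  have hθ0 : 0 ≤ θ := by
    apply div_nonneg <;> linarith
  have hθ1 : 0 ≤ 1 - θ := by
    rw [hθ, sub_nonneg, div_le_one (by linarith)]
    linarith
  have hsum : θ + (1 - θ) = 1 := by ring
  have hconv := convexOn_exp.2 (Set.mem_univ (t * b)) (Set.mem_univ (-(t * b)))
    hθ0 hθ1 hsum
  have harg : θ • (t * b) + (1 - θ) • (-(t * b)) = t * w := by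
    simp only [smul_eq_mul, hθ]
    field_simp
    ring
  rw [harg] at hconv
  refine hconv.trans (le_of_eq ?_)
  simp only [smul_eq_mul, Real.cosh_eq, Real.sinh_eq, hθ]
  field_simp
  ring

lemma integral_exp_le_of_bdd {T : Type*} [MeasurableSpace T] (ρ : Measure T)
    [IsProbabilityMeasure ρ] {ψ : T → ℝ} (hm : Measurable ψ) {c : ℝ}
    (hc : ∀ y, |ψ y| ≤ c) {b : ℝ} (hb : 0 < b)
    (hψ : ∀ y, |ψ y - ∫ z, ψ z ∂ρ| ≤ b) (t : ℝ) :
    ∫ y, Real.exp (t * ψ y) ∂ρ ≤ Real.exp (t * (∫ z, ψ z ∂ρ) + t ^ 2 * b ^ 2 / 2) := by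
  set m0 : ℝ := ∫ z, ψ z ∂ρ with hm0
  have hψint : Integrable ψ ρ := integrable_of_bdd hm hc
  have hWint : Integrable (fun y => ψ y - m0) ρ := hψint.sub (integrable_const m0)
  have hWzero : ∫ y, (ψ y - m0) ∂ρ = 0 := by
    rw [integral_sub hψint (integrable_const m0), integral_const]
    simp [hm0]
  have hpt : ∀ y, Real.exp (t * (ψ y - m0)) ≤
      Real.cosh (t * b) + ((ψ y - m0) / b) * Real.sinh (t * b) :=
    fun y => exp_le_cosh_add hb (hψ y) t
  have hexpint : Integrable (fun y => Real.exp (t * (ψ y - m0))) ρ := by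
    refine (integrable_const (Real.exp (|t| * b))).mono'
      ((Real.measurable_exp.comp ((hm.sub measurable_const).const_mul t)).aestronglyMeasurable)
      (ae_of_all _ fun y => ?_)
    rw [Real.norm_eq_abs, Real.abs_exp, Real.exp_le_exp]
    calc t * (ψ y - m0) ≤ |t * (ψ y - m0)| := le_abs_self _
      _ = |t| * |ψ y - m0| := abs_mul _ _
      _ ≤ |t| * b := mul_le_mul_of_nonneg_left (hψ y) (abs_nonneg t)
  have hIW : ∫ y, Real.exp (t * (ψ y - m0)) ∂ρ ≤ Real.cosh (t * b) := by
    have hrint : Integrable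
        (fun y => Real.cosh (t * b) + ((ψ y - m0) / b) * Real.sinh (t * b)) ρ :=
      (integrable_const _).add ((hWint.div_const b).mul_const _)
    calc ∫ y, Real.exp (t * (ψ y - m0)) ∂ρ
        ≤ ∫ y, (Real.cosh (t * b) + ((ψ y - m0) / b) * Real.sinh (t * b)) ∂ρ :=
          integral_mono hexpint hrint hpt
      _ = Real.cosh (t * b) := by
          rw [integral_add (integrable_const _) ((hWint.div_const b).mul_const _),
            integral_const, integral_mul_const, integral_div, hWzero]
          simp
  calc ∫ y, Real.exp (t * ψ y) ∂ρ
      = ∫ y, Real.exp (t * m0) * Real.exp (t * (ψ y - m0)) ∂ρ := by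
        congr 1; funext y; rw [← Real.exp_add]; ring_nf
    _ = Real.exp (t * m0) * ∫ y, Real.exp (t * (ψ y - m0)) ∂ρ := integral_const_mul _ _
    _ ≤ Real.exp (t * m0) * Real.cosh (t * b) :=
        mul_le_mul_of_nonneg_left hIW (Real.exp_pos _).le
    _ ≤ Real.exp (t * m0) * Real.exp ((t * b) ^ 2 / 2) :=
        mul_le_mul_of_nonneg_left (Real.cosh_le_exp_half_sq _) (Real.exp_pos _).le
    _ = Real.exp (t * m0 + t ^ 2 * b ^ 2 / 2) := by
        rw [← Real.exp_add]; ring_nf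

end AuxHoeffding

section AuxMGF

lemma Mfun_meas {X : List Bool → Ω → S} (hXm : ∀ i, Measurable (X i)) {φ : S → ℝ}
    (hφ : Measurable φ) (A : Finset (List Bool)) : Measurable (Mfun X A φ) :=
  Finset.measurable_sum _ (fun u _ => hφ.comp (hXm u))

lemma Mfun_abs_le {X : List Bool → Ω → S} {φ : S → ℝ} {c : ℝ}
    (hφb : ∀ x, |φ x| ≤ c) (A : Finset (List Bool)) (ω : Ω) :
    |Mfun X A φ ω| ≤ A.card * c := by
  refine (Finset.abs_sum_le_sum_abs _ _).trans ?_
  have := Finset.sum_le_card_nsmul A (fun u => |φ (X u ω)|) c (fun u _ => hφb _)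
  simpa [nsmul_eq_mul] using this

lemma integrable_exp_Mfun (P : Measure Ω) [IsFiniteMeasure P] {X : List Bool → Ω → S}
    (hXm : ∀ i, Measurable (X i)) (A : Finset (List Bool)) {φ : S → ℝ}
    (hφm : Measurable φ) {c : ℝ} (hφb : ∀ x, |φ x| ≤ c) (t : ℝ) :
    Integrable (fun ω => Real.exp (t * Mfun X A φ ω)) P := by
  refine integrable_of_bdd
    (Real.measurable_exp.comp ((Mfun_meas hXm hφm A).const_mul t))
    (c := Real.exp (|t| * (A.card * c))) (fun ω => ?_)
  rw [abs_of_pos (Real.exp_pos _), Real.exp_le_exp]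
  calc t * Mfun X A φ ω ≤ |t * Mfun X A φ ω| := le_abs_self _
    _ = |t| * |Mfun X A φ ω| := abs_mul _ _
    _ ≤ |t| * (A.card * c) :=
        mul_le_mul_of_nonneg_left (Mfun_abs_le hφb A ω) (abs_nonneg t)

lemma P3_exp_le (Pk : Kernel S (S × S)) [IsMarkovKernel Pk] {φ : S → ℝ}
    (hφm : Measurable φ) {c c' : ℝ} (hφb : ∀ x, |φ x| ≤ c)
    (hQb : ∀ x, |Qop Pk φ x| ≤ c') (hb : 0 < c + c') (t : ℝ) (x : S) :
    P3 Pk (fun p => Real.exp (t * (φ p.2.1 + φ p.2.2))) x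
      ≤ Real.exp (2 * t * Qop Pk φ x + t ^ 2 * (2 * (c + c')) ^ 2 / 2) := by
  have hψm : Measurable (fun yz : S × S => φ yz.1 + φ yz.2) :=
    (hφm.comp measurable_fst).add (hφm.comp measurable_snd)
  have hi1 : Integrable (fun yz : S × S => φ yz.1) (Pk x) :=
    integrable_of_bdd (hφm.comp measurable_fst) (fun yz => hφb yz.1)
  have hi2 : Integrable (fun yz : S × S => φ yz.2) (Pk x) :=
    integrable_of_bdd (hφm.comp measurable_snd) (fun yz => hφb yz.2)
  have hmean : ∫ yz, (φ yz.1 + φ yz.2) ∂(Pk x) = 2 * Qop Pk φ x := by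
    rw [integral_add hi1 hi2, Qop]
    ring
  have hcb : ∀ yz : S × S, |φ yz.1 + φ yz.2| ≤ 2 * c := fun yz =>
    (abs_add_le _ _).trans (by have := hφb yz.1; have := hφb yz.2; linarith)
  have hdev : ∀ yz : S × S,
      |(φ yz.1 + φ yz.2) - ∫ zz, (φ zz.1 + φ zz.2) ∂(Pk x)| ≤ 2 * (c + c') := by
    intro yz
    rw [hmean]
    have h1 := hcb yz
    have h2 := hQb x
    have := abs_sub (φ yz.1 + φ yz.2) (2 * Qop Pk φ x)
    calc |(φ yz.1 + φ yz.2) - 2 * Qop Pk φ x|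
        ≤ |φ yz.1 + φ yz.2| + |2 * Qop Pk φ x| := abs_sub _ _
      _ ≤ 2 * c + 2 * c' := by
          rw [abs_mul, abs_of_nonneg (by norm_num : (0:ℝ) ≤ 2)]
          linarith
      _ = 2 * (c + c') := by ring
  have key := integral_exp_le_of_bdd (Pk x) hψm hcb (by linarith : (0:ℝ) < 2 * (c + c'))
    hdev t
  rw [hmean] at key
  calc P3 Pk (fun p => Real.exp (t * (φ p.2.1 + φ p.2.2))) x
      = ∫ yz, Real.exp (t * (φ yz.1 + φ yz.2)) ∂(Pk x) := rfl
    _ ≤ Real.exp (t * (2 * Qop Pk φ x) + t ^ 2 * (2 * (c + c')) ^ 2 / 2) := key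
    _ = Real.exp (2 * t * Qop Pk φ x + t ^ 2 * (2 * (c + c')) ^ 2 / 2) := by ring_nf

lemma P3_exp_meas (Pk : Kernel S (S × S)) [IsMarkovKernel Pk] {φ : S → ℝ}
    (hφm : Measurable φ) (t : ℝ) :
    Measurable (P3 Pk (fun p => Real.exp (t * (φ p.2.1 + φ p.2.2)))) := by
  have h : StronglyMeasurable (fun p : S × (S × S) =>
      Real.exp (t * (φ p.2.1 + φ p.2.2))) :=
    (Real.measurable_exp.comp
      (((hφm.comp measurable_snd.fst).add (hφm.comp measurable_snd.snd)).const_mul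
        t)).stronglyMeasurable
  exact (h.integral_kernel_prod_right' (κ := Pk)).measurable

lemma P3_exp_nonneg (Pk : Kernel S (S × S)) [IsMarkovKernel Pk] {φ : S → ℝ} (t : ℝ)
    (x : S) : 0 ≤ P3 Pk (fun p => Real.exp (t * (φ p.2.1 + φ p.2.2))) x :=
  integral_nonneg fun yz => (Real.exp_pos _).le

lemma treeSigma_le {X : List Bool → Ω → S} (hXm : ∀ i, Measurable (X i))
    (A : Finset (List Bool)) : treeSigma X A ≤ ‹MeasurableSpace Ω› :=
  iSup₂_le fun j _ => (hXm j).comap_le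

lemma exp_Mfun_succ_integral (P : Measure Ω) [IsProbabilityMeasure P]
    (Pk : Kernel S (S × S)) [IsMarkovKernel Pk] {ν : Measure S}
    {X : List Bool → Ω → S} (hX : IsBMC P Pk ν X)
    {φ : S → ℝ} (hφm : Measurable φ) {c : ℝ} (hφb : ∀ x, |φ x| ≤ c)
    (k : ℕ) (t : ℝ) :
    ∫ ω, Real.exp (t * Mfun X (Gen (k + 1)) φ ω) ∂P
      = ∫ ω, ∏ i ∈ Gen k,
          P3 Pk (fun p => Real.exp (t * (φ p.2.1 + φ p.2.2))) (X i ω) ∂P := by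
  set G : S × S × S → ℝ := fun p => Real.exp (t * (φ p.2.1 + φ p.2.2)) with hGdef
  have hGm : Measurable G :=
    Real.measurable_exp.comp
      (((hφm.comp measurable_snd.fst).add (hφm.comp measurable_snd.snd)).const_mul t)
  have hGb : ∃ C, ∀ y, |G y| ≤ C := by
    refine ⟨Real.exp (|t| * (2 * c)), fun y => ?_⟩
    rw [hGdef]
    simp only []
    rw [abs_of_pos (Real.exp_pos _), Real.exp_le_exp]
    calc t * (φ y.2.1 + φ y.2.2) ≤ |t * (φ y.2.1 + φ y.2.2)| := le_abs_self _
      _ = |t| * |φ y.2.1 + φ y.2.2| := abs_mul _ _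
      _ ≤ |t| * (2 * c) := by
          refine mul_le_mul_of_nonneg_left ((abs_add_le _ _).trans ?_) (abs_nonneg t)
          have := hφb y.2.1; have := hφb y.2.2; linarith
  have heq : (fun ω => Real.exp (t * Mfun X (Gen (k + 1)) φ ω)) =
      fun ω => ∏ i ∈ Gen k, G (X i ω, X (i ++ [false]) ω, X (i ++ [true]) ω) := by
    funext ω
    rw [Mfun, Gen_succ_sum k (fun u => φ (X u ω)), Finset.mul_sum, Real.exp_sum]
  have hle : treeSigma X (TreeUpTo k) ≤ ‹MeasurableSpace Ω› := treeSigma_le hX.meas _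
  haveI : SigmaFinite (P.trim hle) := by
    have : IsFiniteMeasure (P.trim hle) := isFiniteMeasure_trim hle
    infer_instance
  rw [heq, ← integral_condExp hle]
  exact integral_congr_ae (hX.branching k (fun _ => G) (fun _ => hGm) (fun _ => hGb))

end AuxMGF

set_option maxHeartbeats 1000000 in
lemma mgf_le (P : Measure Ω) [IsProbabilityMeasure P]
    (Pk : Kernel S (S × S)) [IsMarkovKernel Pk] {ν : Measure S}
    {X : List Bool → Ω → S} (hX : IsBMC P Pk ν X) {g : S → ℝ} (hgm : Measurable g)
    {M α C K : ℝ} (hM : 0 < M) (hα0 : 0 < α) (hC : 0 < C) (hK0 : 0 ≤ K)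
    (hgb : ∀ (j : ℕ) (x : S), |Qiter Pk j g x| ≤ M * α ^ j * C)
    (hK : 2 * (M * C * (1 + α)) ^ 2 + 4 * K * α ^ 2 ≤ 2 * K) :
    ∀ (k j : ℕ) (t : ℝ),
      ∫ ω, Real.exp (t * Mfun X (Gen k) (Qiter Pk j g) ω) ∂P
        ≤ Real.exp (t ^ 2 * 2 ^ k * K * (α ^ j) ^ 2 + |t| * 2 ^ k * (M * C) * α ^ (j + k)) := by
  intro k
  induction k with
  | zero =>
    intro j t
    have hMf : ∀ ω, Mfun X (Gen 0) (Qiter Pk j g) ω = Qiter Pk j g (X [] ω) := by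
      intro ω; rw [Gen_zero]; simp [Mfun]
    have hpt : ∀ ω, Real.exp (t * Mfun X (Gen 0) (Qiter Pk j g) ω)
        ≤ Real.exp (|t| * (M * α ^ j * C)) := by
      intro ω
      rw [hMf ω, Real.exp_le_exp]
      calc t * Qiter Pk j g (X [] ω) ≤ |t * Qiter Pk j g (X [] ω)| := le_abs_self _
        _ = |t| * |Qiter Pk j g (X [] ω)| := abs_mul _ _
        _ ≤ |t| * (M * α ^ j * C) :=
            mul_le_mul_of_nonneg_left (hgb j _) (abs_nonneg t)
    have hint : Integrable (fun ω => Real.exp (t * Mfun X (Gen 0) (Qiter Pk j g) ω)) P :=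
      integrable_exp_Mfun P hX.meas _ (Qiter_meas Pk hgm j) (hgb j) t
    calc ∫ ω, Real.exp (t * Mfun X (Gen 0) (Qiter Pk j g) ω) ∂P
        ≤ ∫ _ω, Real.exp (|t| * (M * α ^ j * C)) ∂P :=
          integral_mono hint (integrable_const _) hpt
      _ = Real.exp (|t| * (M * α ^ j * C)) := by simp
      _ ≤ Real.exp (t ^ 2 * 2 ^ 0 * K * (α ^ j) ^ 2 + |t| * 2 ^ 0 * (M * C) * α ^ (j + 0)) := by
          rw [Real.exp_le_exp]
          have h1 : (0:ℝ) ≤ t ^ 2 * 2 ^ 0 * K * (α ^ j) ^ 2 := by positivity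
          have h2 : |t| * (M * α ^ j * C) = |t| * 2 ^ 0 * (M * C) * α ^ (j + 0) := by
            ring
          linarith
  | succ k ih =>
    intro j t
    set φ : S → ℝ := Qiter Pk j g with hφdef
    have hφm : Measurable φ := Qiter_meas Pk hgm j
    set c : ℝ := M * α ^ j * C with hcdef
    set c' : ℝ := M * α ^ (j + 1) * C with hc'def
    have hφb : ∀ x, |φ x| ≤ c := hgb j
    have hQφ : Qop Pk φ = Qiter Pk (j + 1) g := (Qiter_succ' Pk j g).symm
    have hQb : ∀ x, |Qop Pk φ x| ≤ c' := by rw [hQφ]; exact hgb (j + 1)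
    have hcc' : 0 < c + c' := by positivity
    set B : ℝ := (2 : ℝ) ^ k * (t ^ 2 * (2 * (c + c')) ^ 2 / 2) with hBdef
    have step1 := exp_Mfun_succ_integral P Pk hX hφm hφb k t
    have hpt : ∀ ω, ∏ i ∈ Gen k,
        P3 Pk (fun p => Real.exp (t * (φ p.2.1 + φ p.2.2))) (X i ω)
        ≤ Real.exp ((2 * t) * Mfun X (Gen k) (Qiter Pk (j + 1) g) ω + B) := by
      intro ω
      calc ∏ i ∈ Gen k, P3 Pk (fun p => Real.exp (t * (φ p.2.1 + φ p.2.2))) (X i ω)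
          ≤ ∏ i ∈ Gen k, Real.exp (2 * t * Qop Pk φ (X i ω)
              + t ^ 2 * (2 * (c + c')) ^ 2 / 2) :=
            Finset.prod_le_prod (fun i _ => P3_exp_nonneg Pk t _)
              (fun i _ => P3_exp_le Pk hφm hφb hQb hcc' t _)
        _ = Real.exp (∑ i ∈ Gen k, (2 * t * Qop Pk φ (X i ω)
              + t ^ 2 * (2 * (c + c')) ^ 2 / 2)) := (Real.exp_sum _ _).symm
        _ = Real.exp ((2 * t) * Mfun X (Gen k) (Qiter Pk (j + 1) g) ω + B) := by
            rw [Finset.sum_add_distrib, Finset.sum_const, Gen_card, ← Finset.mul_sum]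
            rw [hQφ]
            congr 1
            rw [Mfun, hBdef, nsmul_eq_mul]
            push_cast
            ring
    have hRint : Integrable (fun ω =>
        Real.exp ((2 * t) * Mfun X (Gen k) (Qiter Pk (j + 1) g) ω + B)) P := by
      have : (fun ω => Real.exp ((2 * t) * Mfun X (Gen k) (Qiter Pk (j + 1) g) ω + B))
          = fun ω => Real.exp ((2 * t) * Mfun X (Gen k) (Qiter Pk (j + 1) g) ω)
              * Real.exp B := by
        funext ω; rw [← Real.exp_add]
      rw [this]
      exact (integrable_exp_Mfun P hX.meas _ (Qiter_meas Pk hgm (j + 1)) (hgb (j + 1))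
        (2 * t)).mul_const _
    have hprod_nonneg : ∀ ω, (0:ℝ) ≤ ∏ i ∈ Gen k,
        P3 Pk (fun p => Real.exp (t * (φ p.2.1 + φ p.2.2))) (X i ω) :=
      fun ω => Finset.prod_nonneg fun i _ => P3_exp_nonneg Pk t _
    calc ∫ ω, Real.exp (t * Mfun X (Gen (k + 1)) (Qiter Pk j g) ω) ∂P
        = ∫ ω, ∏ i ∈ Gen k,
            P3 Pk (fun p => Real.exp (t * (φ p.2.1 + φ p.2.2))) (X i ω) ∂P := step1
      _ ≤ ∫ ω, Real.exp ((2 * t) * Mfun X (Gen k) (Qiter Pk (j + 1) g) ω + B) ∂P :=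
          integral_mono_of_nonneg (ae_of_all _ hprod_nonneg) hRint (ae_of_all _ hpt)
      _ = (∫ ω, Real.exp ((2 * t) * Mfun X (Gen k) (Qiter Pk (j + 1) g) ω) ∂P)
            * Real.exp B := by
          simp_rw [Real.exp_add]
          exact integral_mul_const _ _
      _ ≤ Real.exp ((2 * t) ^ 2 * 2 ^ k * K * (α ^ (j + 1)) ^ 2
            + |2 * t| * 2 ^ k * (M * C) * α ^ (j + 1 + k)) * Real.exp B :=
          mul_le_mul_of_nonneg_right (ih (j + 1) (2 * t)) (Real.exp_pos _).le
      _ ≤ Real.exp (t ^ 2 * 2 ^ (k + 1) * K * (α ^ j) ^ 2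
            + |t| * 2 ^ (k + 1) * (M * C) * α ^ (j + (k + 1))) := by
          rw [← Real.exp_add, Real.exp_le_exp]
          have habs : |2 * t| = 2 * |t| := by
            rw [abs_mul, abs_of_nonneg (by norm_num : (0:ℝ) ≤ 2)]
          have hpow1 : (α ^ (j + 1)) ^ 2 = α ^ 2 * (α ^ j) ^ 2 := by ring
          have hpow2 : α ^ (j + 1 + k) = α ^ (j + (k + 1)) := by
            congr 1; omega
          have hfac : (0:ℝ) ≤ t ^ 2 * 2 ^ k * (α ^ j) ^ 2 := by positivity
          have hmul := mul_le_mul_of_nonneg_left hK hfac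
          have hBeq : B = t ^ 2 * 2 ^ k * (α ^ j) ^ 2 * (2 * (M * C * (1 + α)) ^ 2) := by
            rw [hBdef, hcdef, hc'def]
            ring
          rw [habs, hpow1, hpow2, hBeq]
          have h2pow : (2:ℝ) ^ (k + 1) = 2 * 2 ^ k := by ring
          rw [h2pow]
          nlinarith [hmul]

set_option maxHeartbeats 1000000 in
theorem statement_6 {S : Type*} [MeasurableSpace S] {Ω : Type*} [MeasurableSpace Ω]
    (P : Measure Ω) [IsProbabilityMeasure P]
    (Pk : Kernel S (S × S)) [IsMarkovKernel Pk]
    (ν : Measure S) [IsProbabilityMeasure ν]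
    (X : List Bool → Ω → S) (hX : IsBMC P Pk ν X)
    (μ : Measure S) [IsProbabilityMeasure μ] (M α : ℝ) (hM : 0 < M)
    (hα0 : 0 < α) (hα1 : α < 1) (hα2 : 2 * α ^ 2 < 1)
    (hErg : UnifErg Pk μ M α)
    (f : S → ℝ) (hfm : Measurable f) (hfb : ∃ C, ∀ x, |f x| ≤ C)
    (n q : ℕ) (hq : q ≤ n) (δ : ℝ) (hδ : 0 < δ) :
    P {ω | δ < |((2 : ℝ) ^ (n - q))⁻¹ * Mfun X (Gen (n - q)) (tildeF μ f) ω|} ≤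
      ENNReal.ofReal (2 * Real.exp
        (-(δ ^ 2 * 2 ^ (n - q)) /
            (4 * (⨆ x, |f x|) ^ 2 * M ^ 2 * (1 + α) ^ 2 * ∑' m : ℕ, (2 * α ^ 2) ^ m) *
          (1 - 2 * (⨆ x, |f x|) * M * α ^ (n - q) / δ))) := by
  have hΩ : Nonempty Ω := by
    by_contra h
    have h1 : P Set.univ = 1 := measure_univ
    rw [Set.univ_eq_empty_iff.mpr (not_nonempty_iff.mp h)] at h1
    simp at h1
  have hS : Nonempty S := ⟨X [] (Classical.arbitrary Ω)⟩
  obtain ⟨C₀, hC₀⟩ := hfb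
  set m : ℕ := n - q with hmdef
  set C : ℝ := ⨆ x, |f x| with hCdef
  have hbdd : BddAbove (Set.range fun x => |f x|) :=
    ⟨C₀, by rintro _ ⟨x, rfl⟩; exact hC₀ x⟩
  have hC : ∀ x, |f x| ≤ C := fun x => le_ciSup hbdd x
  have hC0 : 0 ≤ C := (abs_nonneg _).trans (hC (Classical.arbitrary S))
  set g : S → ℝ := tildeF μ f with hgdef
  rcases hC0.eq_or_lt with hCz | hCpos
  · -- degenerate case: `f ≡ 0`
    have hf0 : f = fun _ => (0:ℝ) := by
      funext x
      exact abs_eq_zero.mp (le_antisymm (hCz ▸ hC x) (abs_nonneg _))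
    have hMf : ∀ ω, Mfun X (Gen m) g ω = 0 := by
      intro ω
      rw [Mfun]
      refine Finset.sum_eq_zero fun u _ => ?_
      rw [hgdef, tildeF, hf0]
      simp
    have hset : {ω | δ < |((2 : ℝ) ^ m)⁻¹ * Mfun X (Gen m) g ω|} = ∅ :=
      Set.eq_empty_iff_forall_notMem.mpr fun ω hω => by
        rw [Set.mem_setOf_eq, hMf ω] at hω
        simp at hω
        linarith
    rw [hset, measure_empty]
    exact bot_le
  · -- main case
    set a : ℝ := ∑' (r : ℕ), (2 * α ^ 2) ^ r with hadef
    have h2a : 0 < 1 - 2 * α ^ 2 := by linarith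
    have ha : a = (1 - 2 * α ^ 2)⁻¹ := tsum_geometric_of_lt_one (by positivity) hα2
    have hapos : 0 < a := by rw [ha]; positivity
    set K : ℝ := C ^ 2 * M ^ 2 * (1 + α) ^ 2 * a with hKdef
    have hKpos : 0 < K := by rw [hKdef]; positivity
    have hKlin : K * (1 - 2 * α ^ 2) = C ^ 2 * M ^ 2 * (1 + α) ^ 2 := by
      rw [hKdef, ha]
      field_simp
      exact div_self (by linarith : (0:ℝ) < 1 - α ^ 2 * 2).ne'
    have hKineq : 2 * (M * C * (1 + α)) ^ 2 + 4 * K * α ^ 2 ≤ 2 * K := by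
      nlinarith [hKlin]
    have hgm : Measurable g := hfm.sub measurable_const
    have hgb : ∀ (j : ℕ) (x : S), |Qiter Pk j g x| ≤ M * α ^ j * C := by
      intro j x
      rw [hgdef, Qiter_tildeF Pk μ hfm hC j]
      exact hErg f hfm C hC j x
    have hgb0 : ∀ x, |g x| ≤ M * C := by
      intro x
      have := hgb 0 x
      simpa [Qiter, pow_zero] using this
    have hmgf : ∀ t : ℝ, ∫ ω, Real.exp (t * Mfun X (Gen m) g ω) ∂P
        ≤ Real.exp (t ^ 2 * 2 ^ m * K + |t| * 2 ^ m * (M * C) * α ^ m) := by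
      intro t
      have := mgf_le P Pk hX hgm hM hα0 hCpos hKpos.le hgb hKineq m 0 t
      simpa only [Qiter, Function.iterate_zero, id_eq, pow_zero, one_pow, mul_one,
        zero_add] using this
    set l : ℝ := δ / (2 * K) with hldef
    have hl : 0 < l := by rw [hldef]; positivity
    set E : ℝ := -(δ ^ 2 * 2 ^ m) /
        (4 * C ^ 2 * M ^ 2 * (1 + α) ^ 2 * a) * (1 - 2 * C * M * α ^ m / δ) with hEdef
    have hEeq : -l * (δ * 2 ^ m)
        + (l ^ 2 * 2 ^ m * K + l * 2 ^ m * (M * C) * α ^ m) = E := by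
      rw [hEdef, hldef, hKdef]
      have h1 : (1:ℝ) + α ≠ 0 := by positivity
      field_simp
      ring
    have hint : ∀ t : ℝ, Integrable (fun ω => Real.exp (t * Mfun X (Gen m) g ω)) P :=
      fun t => integrable_exp_Mfun P hX.meas _ hgm hgb0 t
    have tail1 : P {ω | δ * 2 ^ m ≤ Mfun X (Gen m) g ω} ≤ ENNReal.ofReal (Real.exp E) := by
      have h := measure_ge_le_exp_mul_mgf (X := Mfun X (Gen m) g) (μ := P)
        (δ * 2 ^ m) hl.le (hint l)
      have h2 : (P {ω | δ * 2 ^ m ≤ Mfun X (Gen m) g ω}).toReal ≤ Real.exp E := by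
        refine h.trans ?_
        simp only [mgf]
        calc Real.exp (-l * (δ * 2 ^ m)) * ∫ ω, Real.exp (l * Mfun X (Gen m) g ω) ∂P
            ≤ Real.exp (-l * (δ * 2 ^ m)) *
              Real.exp (l ^ 2 * 2 ^ m * K + |l| * 2 ^ m * (M * C) * α ^ m) :=
              mul_le_mul_of_nonneg_left (hmgf l) (Real.exp_pos _).le
          _ = Real.exp E := by
              rw [← Real.exp_add, ← hEeq, abs_of_pos hl]
      rw [← ENNReal.ofReal_toReal (measure_ne_top P _)]
      exact ENNReal.ofReal_le_ofReal h2
    have tail2 : P {ω | Mfun X (Gen m) g ω ≤ -(δ * 2 ^ m)} ≤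
        ENNReal.ofReal (Real.exp E) := by
      have h := measure_le_le_exp_mul_mgf (X := Mfun X (Gen m) g) (μ := P)
        (-(δ * 2 ^ m)) (t := -l) (by linarith) (hint (-l))
      have h2 : (P {ω | Mfun X (Gen m) g ω ≤ -(δ * 2 ^ m)}).toReal ≤ Real.exp E := by
        refine h.trans ?_
        simp only [mgf]
        calc Real.exp (-(-l) * -(δ * 2 ^ m)) *
              ∫ ω, Real.exp (-l * Mfun X (Gen m) g ω) ∂P
            ≤ Real.exp (-(-l) * -(δ * 2 ^ m)) *
              Real.exp ((-l) ^ 2 * 2 ^ m * K + |(-l)| * 2 ^ m * (M * C) * α ^ m) :=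
              mul_le_mul_of_nonneg_left (hmgf (-l)) (Real.exp_pos _).le
          _ = Real.exp E := by
              rw [← Real.exp_add, ← hEeq, abs_neg, abs_of_pos hl]
              congr 1
              ring
      rw [← ENNReal.ofReal_toReal (measure_ne_top P _)]
      exact ENNReal.ofReal_le_ofReal h2
    have h2m : (0:ℝ) < 2 ^ m := by positivity
    have hsub : {ω | δ < |((2 : ℝ) ^ m)⁻¹ * Mfun X (Gen m) g ω|} ⊆
        {ω | δ * 2 ^ m ≤ Mfun X (Gen m) g ω} ∪
          {ω | Mfun X (Gen m) g ω ≤ -(δ * 2 ^ m)} := by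
      intro ω hω
      rw [Set.mem_setOf_eq, abs_mul, abs_inv, abs_of_pos h2m] at hω
      have hZ : δ * 2 ^ m < |Mfun X (Gen m) g ω| := by
        rw [inv_mul_eq_div, lt_div_iff₀ h2m] at hω
        linarith
      rcases le_total 0 (Mfun X (Gen m) g ω) with h | h
      · left
        rw [Set.mem_setOf_eq]
        rw [abs_of_nonneg h] at hZ
        linarith
      · right
        rw [Set.mem_setOf_eq]
        rw [abs_of_nonpos h] at hZ
        linarith
    calc P {ω | δ < |((2 : ℝ) ^ m)⁻¹ * Mfun X (Gen m) g ω|}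
        ≤ P ({ω | δ * 2 ^ m ≤ Mfun X (Gen m) g ω} ∪
            {ω | Mfun X (Gen m) g ω ≤ -(δ * 2 ^ m)}) := measure_mono hsub
      _ ≤ P {ω | δ * 2 ^ m ≤ Mfun X (Gen m) g ω} +
            P {ω | Mfun X (Gen m) g ω ≤ -(δ * 2 ^ m)} := measure_union_le _ _
      _ ≤ ENNReal.ofReal (Real.exp E) + ENNReal.ofReal (Real.exp E) :=
          add_le_add tail1 tail2
      _ = ENNReal.ofReal (2 * Real.exp E) := by
          rw [← ENNReal.ofReal_add (Real.exp_pos _).le (Real.exp_pos _).le]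
          congr 1
          ring

end BMCMDP
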